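/- The one-point compactification of any Hausdorff topological space is k₂-Hausdorff; that is, if X is a T₂ space and X⁺ = X ∪ {∞} is its one-point compactification, then the diagonal of X⁺ is k₂-closed in X⁺ × X⁺. -/
import Mathlib


open Set Filter Topology

universe u

/-- A subset `C` of a space `X` is k₁-closed provided for every compact subset `K` of `X`,
the intersection `C ∩ K` is closed in the subspace topology on `K`. -/
def IsK1Closed {X : Type u} [TopologicalSpace X] (C : Set X) : Prop :=
  ∀ K : Set X, IsCompact K → IsClosed ((Subtype.val : K → X) ⁻¹' C)

/-- A space is k₁-Hausdorff provided its diagonal is k₁-closed in its square. -/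
def K1Hausdorff (X : Type u) [TopologicalSpace X] : Prop :=
  IsK1Closed {p : X × X | p.1 = p.2}

/-- A space is KC provided every compact subset is closed. -/
def KCSpace (X : Type u) [TopologicalSpace X] : Prop :=
  ∀ K : Set X, IsCompact K → IsClosed K

/-- A space `X` is weakly Hausdorff provided for every compact Hausdorff space `K` and
continuous `f : K → X`, the image of `f` is closed in `X`. -/
def WeaklyHausdorff (X : Type u) [TopologicalSpace X] : Prop :=
  ∀ (K : Type u) [TopologicalSpace K] [CompactSpace K] [T2Space K]
    (f : K → X), Continuous f → IsClosed (Set.range f)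

/-- A subset `C` of `X` is k₂-closed provided for every compact Hausdorff space `K` and
continuous `f : K → X`, the preimage `f ⁻¹' C` is closed in `K`. -/
def IsK2Closed {X : Type u} [TopologicalSpace X] (C : Set X) : Prop :=
  ∀ (K : Type u) [TopologicalSpace K] [CompactSpace K] [T2Space K]
    (f : K → X), Continuous f → IsClosed (f ⁻¹' C)

/-- A space is k₂-Hausdorff provided its diagonal is k₂-closed in its square. -/
def K2Hausdorff (X : Type u) [TopologicalSpace X] : Prop :=
  IsK2Closed {p : X × X | p.1 = p.2}

/-- A space has unique sequential limits provided every convergent sequence has a unique limit. -/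
def UniqueSequentialLimits (X : Type u) [TopologicalSpace X] : Prop :=
  ∀ (a : ℕ → X) (l₀ l₁ : X),
    Filter.Tendsto a Filter.atTop (nhds l₀) →
    Filter.Tendsto a Filter.atTop (nhds l₁) → l₀ = l₁
lemma aux_ne_nhds {X : Type u} [TopologicalSpace X] [T2Space X]
    {K : Type u} [TopologicalSpace K] [CompactSpace K] [T2Space K]
    {g h : K → OnePoint X} (hg : Continuous g) (hh : Continuous h)
    {k : K} (hgk : g k = OnePoint.infty) {x : X} (hhk : h k = ↑x) :
    {s : K | g s ≠ h s} ∈ 𝓝 k := by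
  have hU : h ⁻¹' (range ((↑) : X → OnePoint X)) ∈ 𝓝 k :=
    hh.continuousAt.preimage_mem_nhds
      (OnePoint.isOpen_range_coe.mem_nhds (by rw [hhk]; exact mem_range_self x))
  obtain ⟨B, hBmem, hBclosed, hBsub⟩ := exists_mem_nhds_isClosed_subset hU
  have hBcomp : IsCompact B := hBclosed.isCompact
  have himg : IsCompact (h '' B) := hBcomp.image hh
  set Q : Set X := ((↑) : X → OnePoint X) ⁻¹' (h '' B) with hQdef
  have hsub : h '' B ⊆ range ((↑) : X → OnePoint X) := by
    rintro y ⟨s, hs, rfl⟩; exact hBsub hs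
  have hQimg : ((↑) : X → OnePoint X) '' Q = h '' B :=
    image_preimage_eq_of_subset hsub
  have hQcomp : IsCompact Q := by
    rw [OnePoint.isOpenEmbedding_coe.isInducing.isCompact_iff, hQimg]; exact himg
  have hQclosed : IsClosed Q := hQcomp.isClosed
  have hW : IsOpen (((↑) '' Q : Set (OnePoint X))ᶜ) :=
    OnePoint.isOpen_compl_image_coe.2 ⟨hQclosed, hQcomp⟩
  have hWk : g ⁻¹' (((↑) '' Q : Set (OnePoint X))ᶜ) ∈ 𝓝 k :=
    hg.continuousAt.preimage_mem_nhds
      (hW.mem_nhds (by rw [hgk]; exact OnePoint.infty_notMem_image_coe))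
  filter_upwards [hWk, hBmem] with s hs1 hs2 heq
  exact hs1 (by rw [heq, hQimg]; exact mem_image_of_mem h hs2)

theorem onePoint_of_hausdorff_is_k2Hausdorff (X : Type u) [TopologicalSpace X] [T2Space X] :
    K2Hausdorff (OnePoint X) := by
  intro K _ _ _ f hf
  have h1 : Continuous fun s => (f s).1 := continuous_fst.comp hf
  have h2 : Continuous fun s => (f s).2 := continuous_snd.comp hf
  rw [← isOpen_compl_iff, isOpen_iff_mem_nhds]
  intro k hk
  simp only [mem_compl_iff, mem_preimage, mem_setOf_eq] at hk
  have hgoal : {s : K | (f s).1 ≠ (f s).2} ∈ 𝓝 k := by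
    cases hfk1 : (f k).1 with
    | infty =>
        cases hfk2 : (f k).2 with
        | infty => exact absurd (hfk1.trans hfk2.symm) hk
        | coe b => exact aux_ne_nhds h1 h2 hfk1 hfk2
    | coe a =>
        cases hfk2 : (f k).2 with
        | infty =>
            have := aux_ne_nhds h2 h1 hfk2 hfk1
            filter_upwards [this] with s hs heq; exact hs heq.symm
        | coe b =>
            have hab : a ≠ b := by rintro rfl; exact hk (hfk1.trans hfk2.symm)
            obtain ⟨U, V, hUo, hVo, haU, hbV, hUV⟩ := t2_separation hab
            have hU' : (fun s => (f s).1) ⁻¹' (((↑) : X → OnePoint X) '' U) ∈ 𝓝 k :=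
              h1.continuousAt.preimage_mem_nhds
                ((OnePoint.isOpen_image_coe.2 hUo).mem_nhds
                  (by rw [hfk1]; exact mem_image_of_mem _ haU))
            have hV' : (fun s => (f s).2) ⁻¹' (((↑) : X → OnePoint X) '' V) ∈ 𝓝 k :=
              h2.continuousAt.preimage_mem_nhds
                ((OnePoint.isOpen_image_coe.2 hVo).mem_nhds
                  (by rw [hfk2]; exact mem_image_of_mem _ hbV))
            filter_upwards [hU', hV'] with s hs1 hs2 heq
            simp only [mem_preimage] at hs1 hs2
            rw [heq] at hs1
            obtain ⟨u, huU, hu⟩ := hs1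
            obtain ⟨v, hvV, hv⟩ := hs2
            have : u = v := OnePoint.coe_injective (hu.trans hv.symm)
            exact hUV.ne_of_mem huU hvV this
  filter_upwards [hgoal] with s hs hmem
  exact hs hmem
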